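/- There exists a family of Boolean functions {G_i : {0,1}^{4^i} → {0,1}}, indexed by positive integers i, such that (i) both G_i and its negation have unambiguous DNF representations in which every clause contains at most 3^i literals, and (ii) the decision tree depth complexity satisfies D(G_i) ≥ (4^i + 2)/3, which is Ω((3^i)^γ) for γ = log_3(4) > 1. -/

import Mathlib

/-- A deterministic adaptive decision tree over inputs `x : Fin n → Bool`
with outputs in `β`. -/
inductive DTree (n : ℕ) (β : Type) : Type where
  | leaf : β → DTree n β
  | node : Fin n → DTree n β → DTree n β → DTree n β

namespace DTree

/-- Evaluate a decision tree on an input. -/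
def eval {n : ℕ} {β : Type} : DTree n β → (Fin n → Bool) → β
  | .leaf b, _ => b
  | .node i t0 t1, x => if x i then eval t1 x else eval t0 x

/-- Depth of a decision tree: the maximum number of queries on a root-to-leaf path. -/
def depth {n : ℕ} {β : Type} : DTree n β → ℕ
  | .leaf _ => 0
  | .node _ t0 t1 => 1 + max (depth t0) (depth t1)

end DTree

/-- `D(f)`: the minimum depth of a decision tree computing `f`. -/
noncomputable def queryComplexity {n : ℕ} {β : Type} (f : (Fin n → Bool) → β) : ℕ :=
  sInf {d | ∃ T : DTree n β, T.depth ≤ d ∧ ∀ x : Fin n → Bool, T.eval x = f x}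

/-- A partial assignment (clause) `w ∈ {0,1,*}^n` agrees with `x ∈ {0,1}^n`
if every 0/1 entry of `w` matches `x`. -/
def Agrees {n : ℕ} (w : Fin n → Option Bool) (x : Fin n → Bool) : Prop :=
  ∀ (i : Fin n) (b : Bool), w i = some b → x i = b

/-- The number of literals of a clause. -/
def wSize {n : ℕ} (w : Fin n → Option Bool) : ℕ :=
  (Finset.univ.filter (fun i : Fin n => (w i).isSome)).card

/-- The set `Cs` of clauses (each clause being a partial assignment, satisfied by `x`
exactly when it agrees with `x`) is an unambiguous DNF representation of `f`:
`f x = 1` iff some clause is satisfied by `x`, and every input satisfies at most one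
clause. -/
def IsUDNF {n : ℕ} (f : (Fin n → Bool) → Bool) (Cs : Set (Fin n → Option Bool)) : Prop :=
  (∀ x : Fin n → Bool, f x = true ↔ ∃ c ∈ Cs, Agrees c x) ∧
  (∀ x : Fin n → Bool, ∀ c ∈ Cs, ∀ c' ∈ Cs, Agrees c x → Agrees c' x → c = c')

section SavickyAux

instance {n : ℕ} (w : Fin n → Option Bool) (x : Fin n → Bool) : Decidable (Agrees w x) :=
  inferInstanceAs (Decidable (∀ (i : Fin n) (b : Bool), w i = some b → x i = b))

/-- our own update function (decide-friendly) -/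
def updF {n : ℕ} {α : Type} (ρ : Fin n → α) (k : Fin n) (v : α) : Fin n → α :=
  fun x => if x = k then v else ρ x

def g4 (y : Fin 4 → Bool) : Bool :=
  if y 0 then (!(y 1) && !(y 2) && !(y 3)) else !((y 1) && (y 2) && (y 3))

def g4C (b : Bool) : List (Fin 4 → Option Bool) :=
  match b with
  | true => [![none, some false, some false, some false],
             ![some false, some false, none, some true],
             ![some false, none, some true, some false],
             ![some false, some true, some false, none]]
  | false => [![none, some true, some true, some true],
              ![some true, some true, none, some false],
              ![some true, none, some false, some true],
              ![some true, some false, some true, none]]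

def Inv4 : List (Fin 4 → Option Bool) :=
  [![none, none, none, none],
   ![some false, none, none, none], ![some true, none, none, none],
   ![none, some false, none, none], ![none, some true, none, none],
   ![none, none, some false, none], ![none, none, some true, none],
   ![none, none, none, some false], ![none, none, none, some true],
   ![some false, some true, none, none], ![some false, none, some true, none],
   ![some false, none, none, some true], ![some true, some false, none, none],
   ![some true, none, some false, none], ![some true, none, none, some false],
   ![none, some false, some false, none], ![none, some false, none, some false],
   ![none, some true, some true, none], ![none, some true, none, some true],
   ![none, none, some false, some false], ![none, none, some true, some true],
   ![some false, some true, some true, none], ![some false, some true, none, some true],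
   ![some false, none, some true, some true], ![some true, some false, some false, none],
   ![some true, some false, none, some false], ![some true, none, some false, some false],
   ![none, some false, some false, some true], ![none, some false, some true, some false],
   ![none, some false, some true, some true], ![none, some true, some false, some false],
   ![none, some true, some false, some true], ![none, some true, some true, some false]]

-- decide facts
set_option maxRecDepth 100000
lemma g4_rep : ∀ (y : Fin 4 → Bool) (b : Bool), g4 y = b ↔ ∃ c ∈ g4C b, Agrees c y := by decide

lemma g4_unamb : ∀ (b : Bool), ∀ c ∈ g4C b, ∀ c' ∈ g4C b, ∀ (y : Fin 4 → Bool),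
    Agrees c y → Agrees c' y → c = c' := by decide

lemma g4_width : ∀ (b : Bool), ∀ c ∈ g4C b, wSize c = 3 := by decide

lemma inv_empty : (fun _ => none) ∈ Inv4 := by decide

lemma inv_nc : ∀ com ∈ Inv4, ∃ y z : Fin 4 → Bool,
    Agrees com y ∧ Agrees com z ∧ g4 y = true ∧ g4 z = false := by decide

lemma inv_ext : ∀ com ∈ Inv4, wSize com ≤ 2 → ∀ j : Fin 4, com j = none →
    ∃ b : Bool, updF com j (some b) ∈ Inv4 := by decide

section Blocks

lemma pow4_pos (i : ℕ) : 0 < 4 ^ i := Nat.pow_pos (by norm_num)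

def blk {i : ℕ} (j : Fin 4) (t : Fin (4 ^ i)) : Fin (4 ^ (i + 1)) :=
  ⟨j.val * 4 ^ i + t.val, by
    have h1 : j.val + 1 ≤ 4 := j.isLt
    have h2 : t.val < 4 ^ i := t.isLt
    have : j.val * 4 ^ i + t.val < (j.val + 1) * 4 ^ i := by
      rw [Nat.succ_mul]; omega
    have h4 : (j.val + 1) * 4 ^ i ≤ 4 * 4 ^ i := Nat.mul_le_mul_right _ h1
    have h5 : (4 : ℕ) ^ (i + 1) = 4 * 4 ^ i := by rw [pow_succ]; ring
    omega⟩

def dec {i : ℕ} (k : Fin (4 ^ (i + 1))) : Fin 4 × Fin (4 ^ i) :=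
  (⟨k.val / 4 ^ i, by
      have h2 : k.val < 4 ^ (i + 1) := k.isLt
      have h5 : (4 : ℕ) ^ (i + 1) = 4 ^ i * 4 := by rw [pow_succ]
      exact Nat.div_lt_of_lt_mul (by omega)⟩,
   ⟨k.val % 4 ^ i, Nat.mod_lt _ (pow4_pos i)⟩)

lemma dec_blk {i : ℕ} (j : Fin 4) (t : Fin (4 ^ i)) : dec (blk j t) = (j, t) := by
  unfold dec blk
  have ht : t.val < 4 ^ i := t.isLt
  have hpos := pow4_pos i
  apply Prod.ext
  · apply Fin.ext
    simp only
    rw [Nat.mul_comm, Nat.mul_add_div hpos, Nat.div_eq_of_lt ht]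
    omega
  · apply Fin.ext
    simp only
    rw [Nat.mul_comm, Nat.mul_add_mod, Nat.mod_eq_of_lt ht]

lemma blk_dec {i : ℕ} (k : Fin (4 ^ (i + 1))) : blk (dec k).1 (dec k).2 = k := by
  unfold dec blk
  apply Fin.ext
  simp only
  rw [Nat.mul_comm]
  exact Nat.div_add_mod k.val (4 ^ i)

lemma blk_right_inj {i : ℕ} {j : Fin 4} {t s : Fin (4 ^ i)} (h : blk j t = blk j s) : t = s := by
  have h2 : ((j, t) : Fin 4 × Fin (4 ^ i)) = (j, s) := by
    rw [← dec_blk j t, ← dec_blk j s, h]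
  simpa using congrArg Prod.snd h2

lemma blk_ne_of_ne {i : ℕ} {j j' : Fin 4} {t s : Fin (4 ^ i)} (h : j' ≠ j) :
    blk j' s ≠ blk j t := by
  intro he
  have h2 : ((j', s) : Fin 4 × Fin (4 ^ i)) = (j, t) := by
    rw [← dec_blk j' s, ← dec_blk j t, he]
  exact h (by simpa using congrArg Prod.fst h2)

def decEquiv {i : ℕ} : Fin (4 ^ (i + 1)) ≃ Fin 4 × Fin (4 ^ i) where
  toFun := dec
  invFun := fun p => blk p.1 p.2
  left_inv := blk_dec
  right_inv := fun p => by rw [show p = ((p.1 : Fin 4), (p.2 : Fin (4 ^ i))) from rfl]; exact dec_blk p.1 p.2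

end Blocks

section WSizeLemmas

lemma wSize_none {n : ℕ} : wSize (fun _ : Fin n => (none : Option Bool)) = 0 := by
  simp [wSize]

lemma wSize_updF {n : ℕ} {ρ : Fin n → Option Bool} {k : Fin n} (b : Bool) (h : ρ k = none) :
    wSize (updF ρ k (some b)) = wSize ρ + 1 := by
  unfold wSize
  have hset : (Finset.univ.filter (fun i : Fin n => ((updF ρ k (some b)) i).isSome))
      = insert k (Finset.univ.filter (fun i : Fin n => (ρ i).isSome)) := by
    ext i
    by_cases hik : i = k
    · subst hik; simp only [Finset.mem_filter, Finset.mem_insert, Finset.mem_univ, true_and]; simp [updF, h]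
    · simp only [Finset.mem_filter, Finset.mem_insert, Finset.mem_univ, true_and]; simp [updF, hik]
  rw [hset, Finset.card_insert_of_notMem (by simp [h])]

lemma wSize_blocks {i : ℕ} (ρ : Fin (4 ^ (i + 1)) → Option Bool) :
    wSize ρ = ∑ j : Fin 4, wSize (fun t => ρ (blk j t)) := by
  unfold wSize
  rw [Finset.card_filter]
  have : ∀ j : Fin 4, (Finset.univ.filter fun t : Fin (4 ^ i) => (ρ (blk j t)).isSome).card
      = ∑ t : Fin (4 ^ i), if (ρ (blk j t)).isSome then 1 else 0 := by
    intro j; rw [Finset.card_filter]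
  simp only [this]
  calc (∑ k : Fin (4 ^ (i + 1)), if (ρ k).isSome then 1 else 0)
      = ∑ p : Fin 4 × Fin (4 ^ i), (if (ρ (blk p.1 p.2)).isSome then 1 else 0) := by
        refine Fintype.sum_equiv decEquiv _ _ (fun k => ?_)
        simp only [decEquiv, Equiv.coe_fn_mk]
        exact congrArg (fun z => if (ρ z).isSome then 1 else 0) (blk_dec k).symm
    _ = ∑ j : Fin 4, ∑ t : Fin (4 ^ i), (if (ρ (blk j t)).isSome then 1 else 0) :=
        Fintype.sum_prod_type _

end WSizeLemmas

section GDef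

def G : (i : ℕ) → (Fin (4 ^ i) → Bool) → Bool
  | 0, x => x ⟨0, pow4_pos 0⟩
  | (i+1), x => g4 (fun j => G i (fun t => x (blk j t)))

def comb {i : ℕ} (c : Fin 4 → Option Bool) (subs : Fin 4 → (Fin (4 ^ i) → Option Bool)) :
    Fin (4 ^ (i + 1)) → Option Bool :=
  fun k => if (c (dec k).1).isSome then subs (dec k).1 (dec k).2 else none

lemma comb_blk {i : ℕ} (c : Fin 4 → Option Bool) (subs : Fin 4 → (Fin (4 ^ i) → Option Bool))
    (j : Fin 4) (t : Fin (4 ^ i)) :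
    comb c subs (blk j t) = if (c j).isSome then subs j t else none := by
  unfold comb; rw [dec_blk]

def Cs : (i : ℕ) → Bool → Set (Fin (4 ^ i) → Option Bool)
  | 0, b => {w | w = fun _ => some b}
  | (i+1), b => {C | ∃ c ∈ g4C b, ∃ subs : Fin 4 → (Fin (4 ^ i) → Option Bool),
      (∀ j bj, c j = some bj → subs j ∈ Cs i bj) ∧ C = comb c subs}

lemma fin_pow0 (k : Fin (4 ^ 0)) : k = ⟨0, pow4_pos 0⟩ := by
  apply Fin.ext
  have h1 := k.isLt
  have h2 : (4 : ℕ) ^ 0 = 1 := rfl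
  omega

lemma agrees_comb_iff {i : ℕ} (c : Fin 4 → Option Bool) (subs : Fin 4 → (Fin (4 ^ i) → Option Bool))
    (x : Fin (4 ^ (i + 1)) → Bool) :
    Agrees (comb c subs) x ↔ ∀ j bj, c j = some bj → Agrees (subs j) (fun t => x (blk j t)) := by
  constructor
  · intro h j bj hc t b' hs
    refine h (blk j t) b' ?_
    rw [comb_blk, hc]
    simpa using hs
  · intro h k b' hk
    have hbd := blk_dec k
    rw [← hbd]
    unfold comb at hk
    by_cases hcs : (c (dec k).1).isSome
    · obtain ⟨bj, hbj⟩ := Option.isSome_iff_exists.mp hcs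
      refine h (dec k).1 bj hbj (dec k).2 b' ?_
      simpa [hcs] using hk
    · simp [hcs] at hk

lemma G_rep : ∀ i (x : Fin (4 ^ i) → Bool) (b : Bool), G i x = b ↔ ∃ C ∈ Cs i b, Agrees C x := by
  intro i
  induction i with
  | zero =>
    intro x b
    constructor
    · intro h
      refine ⟨fun _ => some b, by simp [Cs], ?_⟩
      intro k c hk
      injection hk with hk'
      subst hk'
      rw [fin_pow0 k]
      exact h
    · rintro ⟨C, hC, hA⟩
      simp only [Cs, Set.mem_setOf_eq] at hC
      subst hC
      exact hA ⟨0, pow4_pos 0⟩ b rfl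
  | succ i ih =>
    intro x b
    have hGx : G (i + 1) x = g4 (fun j => G i (fun t => x (blk j t))) := rfl
    constructor
    · intro h
      obtain ⟨c, hcmem, hcy⟩ := (g4_rep (fun j => G i (fun t => x (blk j t))) b).mp (hGx ▸ h)
      have hsub : ∀ j : Fin 4, ∃ s : Fin (4 ^ i) → Option Bool,
          ∀ bj, c j = some bj → s ∈ Cs i bj ∧ Agrees s (fun t => x (blk j t)) := by
        intro j
        cases hcj : c j with
        | none => exact ⟨fun _ => none, by intro bj h'; cases h'⟩
        | some bj =>
          have hyj : G i (fun t => x (blk j t)) = bj := hcy j bj hcj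
          obtain ⟨C, hC1, hC2⟩ := (ih (fun t => x (blk j t)) bj).mp hyj
          refine ⟨C, fun bj' h' => ?_⟩
          injection h' with h''
          subst h''
          exact ⟨hC1, hC2⟩
      choose subs hsubs using hsub
      refine ⟨comb c subs, ?_, ?_⟩
      · simp only [Cs, Set.mem_setOf_eq]
        exact ⟨c, hcmem, subs, fun j bj h' => (hsubs j bj h').1, rfl⟩
      · rw [agrees_comb_iff]
        exact fun j bj h' => (hsubs j bj h').2
    · rintro ⟨C, hC, hA⟩
      simp only [Cs, Set.mem_setOf_eq] at hC
      obtain ⟨c, hcmem, subs, hsubs, rfl⟩ := hC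
      rw [agrees_comb_iff] at hA
      have hcy : Agrees c (fun j => G i (fun t => x (blk j t))) := by
        intro j bj hcj
        exact (ih _ bj).mpr ⟨subs j, hsubs j bj hcj, hA j bj hcj⟩
      rw [hGx]
      exact (g4_rep _ b).mpr ⟨c, hcmem, hcy⟩

lemma G_unamb : ∀ i (b : Bool) (x : Fin (4 ^ i) → Bool), ∀ C ∈ Cs i b, ∀ C' ∈ Cs i b,
    Agrees C x → Agrees C' x → C = C' := by
  intro i
  induction i with
  | zero =>
    intro b x C hC C' hC' _ _
    simp only [Cs, Set.mem_setOf_eq] at hC hC'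
    rw [hC, hC']
  | succ i ih =>
    intro b x C hC C' hC' hA hA'
    simp only [Cs, Set.mem_setOf_eq] at hC hC'
    obtain ⟨c, hcm, subs, hsub, rfl⟩ := hC
    obtain ⟨c', hcm', subs', hsub', rfl⟩ := hC'
    rw [agrees_comb_iff] at hA hA'
    have hcy : Agrees c (fun j => G i (fun t => x (blk j t))) :=
      fun j bj hcj => (G_rep i _ bj).mpr ⟨subs j, hsub j bj hcj, hA j bj hcj⟩
    have hcy' : Agrees c' (fun j => G i (fun t => x (blk j t))) :=
      fun j bj hcj => (G_rep i _ bj).mpr ⟨subs' j, hsub' j bj hcj, hA' j bj hcj⟩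
    have hcc : c = c' := g4_unamb b c hcm c' hcm' _ hcy hcy'
    subst hcc
    funext k
    have hbd := blk_dec k
    rw [← hbd, comb_blk, comb_blk]
    cases hcj : c (dec k).1 with
    | none => simp [hcj]
    | some bj =>
      simp only [hcj, Option.isSome_some, if_true]
      have heq : subs (dec k).1 = subs' (dec k).1 :=
        ih bj (fun t => x (blk (dec k).1 t)) _ (hsub _ bj hcj) _ (hsub' _ bj hcj)
          (hA _ bj hcj) (hA' _ bj hcj)
      rw [heq]

lemma G_width : ∀ i (b : Bool), ∀ C ∈ Cs i b, 1 ≤ wSize C ∧ wSize C ≤ 3 ^ i := by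
  intro i
  induction i with
  | zero =>
    intro b C hC
    simp only [Cs, Set.mem_setOf_eq] at hC
    subst hC
    have h1 : wSize (fun _ : Fin (4 ^ 0) => some b) = 1 := by
      unfold wSize
      simp
    rw [h1]
    simp
  | succ i ih =>
    intro b C hC
    simp only [Cs, Set.mem_setOf_eq] at hC
    obtain ⟨c, hcm, subs, hsub, rfl⟩ := hC
    rw [wSize_blocks]
    have hterm : ∀ j : Fin 4, wSize (fun t => comb c subs (blk j t))
        = if (c j).isSome then wSize (subs j) else 0 := by
      intro j
      cases hcj : c j with
      | none =>
        have he : (fun t => comb c subs (blk j t)) = (fun _ => none) := by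
          funext t; rw [comb_blk]; simp [hcj]
        rw [he, wSize_none]
        simp [hcj]
      | some bj =>
        have he : (fun t => comb c subs (blk j t)) = subs j := by
          funext t; rw [comb_blk]; simp [hcj]
        rw [he]
        simp [hcj]
    simp only [hterm]
    have hc3 : (Finset.univ.filter (fun j : Fin 4 => (c j).isSome)).card = 3 := g4_width b c hcm
    constructor
    · have hne : (Finset.univ.filter (fun j : Fin 4 => (c j).isSome)).Nonempty :=
        Finset.card_pos.mp (by omega)
      obtain ⟨j0, hj0⟩ := hne
      have hj0s : (c j0).isSome := (Finset.mem_filter.mp hj0).2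
      obtain ⟨bj, hbj⟩ := Option.isSome_iff_exists.mp hj0s
      have h1 : 1 ≤ wSize (subs j0) := (ih bj (subs j0) (hsub j0 bj hbj)).1
      calc 1 ≤ (if (c j0).isSome then wSize (subs j0) else 0) := by rw [if_pos hj0s]; exact h1
        _ ≤ ∑ j : Fin 4, (if (c j).isSome then wSize (subs j) else 0) :=
            Finset.single_le_sum (f := fun j => if (c j).isSome then wSize (subs j) else 0)
              (fun _ _ => Nat.zero_le _) (Finset.mem_univ j0)
    · calc ∑ j : Fin 4, (if (c j).isSome then wSize (subs j) else 0)
          ≤ ∑ j : Fin 4, (if (c j).isSome then 3 ^ i else 0) := by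
            refine Finset.sum_le_sum fun j _ => ?_
            cases hcj : c j with
            | none => simp [hcj]
            | some bj =>
              simp only [hcj, Option.isSome_some, if_true]
              exact (ih bj _ (hsub j bj hcj)).2
        _ = (Finset.univ.filter (fun j : Fin 4 => (c j).isSome)).card * 3 ^ i := by
            rw [← Finset.sum_filter, Finset.sum_const, smul_eq_mul]
        _ = 3 * 3 ^ i := by rw [hc3]
        _ = 3 ^ (i + 1) := by rw [pow_succ]; ring

end GDef

section FullTree

def mkAux {n : ℕ} {β : Type} : ℕ → ℕ → ((Fin n → Bool) → β) → DTree n β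
  | 0, _, f => .leaf (f fun _ => false)
  | (fu+1), s, f =>
    if h : s < n then
      .node ⟨s, h⟩ (mkAux fu (s+1) (fun x => f (updF x ⟨s, h⟩ false)))
                   (mkAux fu (s+1) (fun x => f (updF x ⟨s, h⟩ true)))
    else .leaf (f fun _ => false)

lemma mkAux_depth {n : ℕ} {β : Type} : ∀ (fu s : ℕ) (f : (Fin n → Bool) → β),
    (mkAux fu s f).depth ≤ fu := by
  intro fu
  induction fu with
  | zero => intro s f; simp [mkAux, DTree.depth]
  | succ fu ih =>
    intro s f
    rw [mkAux]
    by_cases h : s < n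
    · rw [dif_pos h]
      have h0 := ih (s+1) (fun x => f (updF x ⟨s, h⟩ false))
      have h1 := ih (s+1) (fun x => f (updF x ⟨s, h⟩ true))
      simp only [DTree.depth]
      omega
    · rw [dif_neg h]
      simp [DTree.depth]

lemma updF_self {n : ℕ} {α : Type} (x : Fin n → α) (k : Fin n) : updF x k (x k) = x := by
  funext i
  unfold updF
  by_cases h : i = k
  · subst h; rw [if_pos rfl]
  · rw [if_neg h]

lemma mkAux_eval {n : ℕ} {β : Type} : ∀ (fu s : ℕ) (f : (Fin n → Bool) → β) (x : Fin n → Bool),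
    n ≤ s + fu →
    (∀ x y : Fin n → Bool, (∀ k : Fin n, s ≤ k.val → x k = y k) → f x = f y) →
    (mkAux fu s f).eval x = f x := by
  intro fu
  induction fu with
  | zero =>
    intro s f x hn hf
    rw [mkAux]
    show f (fun _ => false) = f x
    refine hf _ _ (fun k hk => ?_)
    have := k.isLt
    omega
  | succ fu ih =>
    intro s f x hn hf
    rw [mkAux]
    by_cases h : s < n
    · rw [dif_pos h]
      have hcompat : ∀ c : Bool, ∀ x y : Fin n → Bool, (∀ k : Fin n, s + 1 ≤ k.val → x k = y k) →
          f (updF x ⟨s, h⟩ c) = f (updF y ⟨s, h⟩ c) := by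
        intro c x y hxy
        refine hf _ _ (fun k hk => ?_)
        unfold updF
        by_cases hks : k = ⟨s, h⟩
        · rw [if_pos hks, if_pos hks]
        · rw [if_neg hks, if_neg hks]
          refine hxy k ?_
          have : k.val ≠ s := fun hc => hks (Fin.ext hc)
          omega
      cases hx : x ⟨s, h⟩ with
      | false =>
        have := ih (s+1) (fun x => f (updF x ⟨s, h⟩ false)) x (by omega) (hcompat false)
        simp only [DTree.eval, hx, if_false]
        rw [this]
        show f (updF x ⟨s, h⟩ false) = f x
        rw [← hx, updF_self]
      | true =>
        have := ih (s+1) (fun x => f (updF x ⟨s, h⟩ true)) x (by omega) (hcompat true)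
        simp only [DTree.eval, hx, if_true]
        rw [this]
        show f (updF x ⟨s, h⟩ true) = f x
        rw [← hx, updF_self]
    · rw [dif_neg h]
      show f (fun _ => false) = f x
      refine hf _ _ (fun k hk => ?_)
      have := k.isLt
      omega

def fullTree {n : ℕ} {β : Type} (f : (Fin n → Bool) → β) : DTree n β := mkAux n 0 f

lemma fullTree_depth {n : ℕ} {β : Type} (f : (Fin n → Bool) → β) : (fullTree f).depth ≤ n :=
  mkAux_depth n 0 f

lemma fullTree_eval {n : ℕ} {β : Type} (f : (Fin n → Bool) → β) (x : Fin n → Bool) :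
    (fullTree f).eval x = f x :=
  mkAux_eval n 0 f x (by omega) (fun x y h => congrArg f (funext fun k => h k (Nat.zero_le _)))

end FullTree

section Adversary

def attains {n : ℕ} (f : (Fin n → Bool) → Bool) (ρ : Fin n → Option Bool) (b : Bool) : Prop :=
  ∃ x, Agrees ρ x ∧ f x = b

lemma agrees_of_updF {n : ℕ} {ρ : Fin n → Option Bool} {k : Fin n} {b : Bool}
    {x : Fin n → Bool} (hk : ρ k = none) (h : Agrees (updF ρ k (some b)) x) :
    Agrees ρ x ∧ x k = b := by
  constructor
  · intro i c hi
    have hik : i ≠ k := by rintro rfl; rw [hk] at hi; cases hi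
    refine h i c ?_
    unfold updF
    rw [if_neg hik]
    exact hi
  · exact h k b (by unfold updF; rw [if_pos rfl])

lemma agrees_updF_of_agrees {n : ℕ} {ρ : Fin n → Option Bool} {t : Fin n}
    {x : Fin n → Bool} (hxa : Agrees ρ x) : Agrees (updF ρ t (some (x t))) x := by
  intro s c hs
  unfold updF at hs
  by_cases hst : s = t
  · subst hst; rw [if_pos rfl] at hs; exact Option.some.inj hs
  · rw [if_neg hst] at hs; exact hxa s c hs

lemma tree_bound {n : ℕ} (f : (Fin n → Bool) → Bool) (P : (Fin n → Option Bool) → Prop) (N : ℕ)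
    (h1 : ∀ ρ, P ρ → ∀ b, attains f ρ b)
    (h2 : ∀ ρ (k : Fin n), P ρ → ρ k = none → wSize ρ + 2 ≤ N → ∃ b : Bool, P (updF ρ k (some b))) :
    ∀ T : DTree n Bool, ∀ ρ, P ρ → T.depth + wSize ρ + 1 ≤ N →
      (∀ x, Agrees ρ x → T.eval x = f x) → False := by
  intro T
  induction T with
  | leaf b =>
    intro ρ hP _ hx
    obtain ⟨x, hxa, hxv⟩ := h1 ρ hP (!b)
    have hb : b = f x := hx x hxa
    rw [hxv] at hb
    cases b <;> simp at hb
  | node k t0 t1 ih0 ih1 =>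
    intro ρ hP hd hx
    have hdepth : (DTree.node k t0 t1).depth = 1 + max t0.depth t1.depth := rfl
    have hmax0 := Nat.le_max_left t0.depth t1.depth
    have hmax1 := Nat.le_max_right t0.depth t1.depth
    cases hρk : ρ k with
    | some c =>
      cases c with
      | false =>
        refine ih0 ρ hP (by rw [hdepth] at hd; omega) (fun x hxa => ?_)
        have hxk : x k = false := hxa k false hρk
        have := hx x hxa
        simp only [DTree.eval, hxk, if_false] at this
        exact this
      | true =>
        refine ih1 ρ hP (by rw [hdepth] at hd; omega) (fun x hxa => ?_)
        have hxk : x k = true := hxa k true hρk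
        have := hx x hxa
        simp only [DTree.eval, hxk, if_true] at this
        exact this
    | none =>
      have hwb : wSize ρ + 2 ≤ N := by rw [hdepth] at hd; omega
      obtain ⟨b, hPb⟩ := h2 ρ k hP hρk hwb
      have hwu := wSize_updF b hρk
      cases b with
      | false =>
        refine ih0 (updF ρ k (some false)) hPb (by rw [hdepth] at hd; omega) (fun x hxa => ?_)
        obtain ⟨hag, hxk⟩ := agrees_of_updF hρk hxa
        have := hx x hag
        simp only [DTree.eval, hxk, if_false] at this
        exact this
      | true =>
        refine ih1 (updF ρ k (some true)) hPb (by rw [hdepth] at hd; omega) (fun x hxa => ?_)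
        obtain ⟨hag, hxk⟩ := agrees_of_updF hρk hxa
        have := hx x hag
        simp only [DTree.eval, hxk, if_true] at this
        exact this

end Adversary

section Package

lemma updF_blk_same {i : ℕ} (ρ : Fin (4 ^ (i + 1)) → Option Bool) (j : Fin 4)
    (t : Fin (4 ^ i)) (v : Option Bool) :
    (fun s => updF ρ (blk j t) v (blk j s)) = updF (fun s => ρ (blk j s)) t v := by
  funext s
  unfold updF
  by_cases hst : s = t
  · subst hst; rw [if_pos rfl, if_pos rfl]
  · rw [if_neg (fun h => hst (blk_right_inj h)), if_neg hst]

lemma updF_blk_other {i : ℕ} (ρ : Fin (4 ^ (i + 1)) → Option Bool) {j j' : Fin 4}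
    (t : Fin (4 ^ i)) (v : Option Bool) (hjj : j' ≠ j) :
    (fun s => updF ρ (blk j t) v (blk j' s)) = (fun s => ρ (blk j' s)) := by
  funext s
  unfold updF
  rw [if_neg (blk_ne_of_ne hjj)]

lemma package : ∀ i : ℕ, ∃ P : (Fin (4 ^ i) → Option Bool) → Prop,
    P (fun _ => none) ∧
    (∀ ρ, P ρ → ∀ b, attains (G i) ρ b) ∧
    (∀ ρ (k : Fin (4 ^ i)), P ρ → ρ k = none → wSize ρ + 2 ≤ 4 ^ i →
      ∃ b : Bool, P (updF ρ k (some b))) := by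
  intro i
  induction i with
  | zero =>
    refine ⟨fun ρ => ∀ k, ρ k = none, fun _ => rfl, ?_, ?_⟩
    · intro ρ hρ b
      refine ⟨fun _ => b, ?_, rfl⟩
      intro k c hk
      rw [hρ k] at hk
      cases hk
    · intro ρ k _ _ hw
      exfalso
      have h1 : (4 : ℕ) ^ 0 = 1 := rfl
      omega
  | succ i ih =>
    obtain ⟨P, p0, p1, p2⟩ := ih
    refine ⟨fun ρ => ∃ com ∈ Inv4, ∀ j : Fin 4,
        (com j = none → P (fun t => ρ (blk j t)) ∧ wSize (fun t => ρ (blk j t)) + 1 ≤ 4 ^ i) ∧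
        (∀ bj, com j = some bj →
          attains (G i) (fun t => ρ (blk j t)) bj ∧ 4 ^ i ≤ wSize (fun t => ρ (blk j t))),
        ?_, ?_, ?_⟩
    -- initial state
    · refine ⟨fun _ => none, inv_empty, fun j => ⟨fun _ => ⟨p0, ?_⟩, fun bj h => by cases h⟩⟩
      show wSize (fun _ : Fin (4 ^ i) => (none : Option Bool)) + 1 ≤ 4 ^ i
      rw [wSize_none]
      exact pow4_pos i
    -- nonconstancy (attains both values)
    · rintro ρ ⟨com, hcm, hblocks⟩ b
      obtain ⟨y, z, hay, haz, hgy, hgz⟩ := inv_nc com hcm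
      obtain ⟨w, haw, hgw⟩ : ∃ w, Agrees com w ∧ g4 w = b := by
        cases b
        · exact ⟨z, haz, hgz⟩
        · exact ⟨y, hay, hgy⟩
      have hxs : ∀ j : Fin 4, ∃ xj : Fin (4 ^ i) → Bool,
          Agrees (fun t => ρ (blk j t)) xj ∧ G i xj = w j := by
        intro j
        cases hcj : com j with
        | none => exact p1 _ ((hblocks j).1 hcj).1 (w j)
        | some c =>
          have hwc : w j = c := haw j c hcj
          rw [hwc]
          exact ((hblocks j).2 c hcj).1
      choose xs hxs1 hxs2 using hxs
      refine ⟨fun k => xs (dec k).1 (dec k).2, ?_, ?_⟩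
      · intro k c hk
        have hbd := blk_dec k
        refine hxs1 (dec k).1 (dec k).2 c ?_
        show ρ (blk (dec k).1 (dec k).2) = some c
        rw [hbd]
        exact hk
      · show g4 (fun j => G i (fun t => xs (dec (blk j t)).1 (dec (blk j t)).2)) = b
        have he : (fun j => G i (fun t => xs (dec (blk j t)).1 (dec (blk j t)).2)) = w := by
          funext j
          have he2 : (fun t => xs (dec (blk j t)).1 (dec (blk j t)).2) = xs j := by
            funext t
            rw [dec_blk]
          rw [he2, hxs2]
        rw [he, hgw]
    -- closure under one more query
    · rintro ρ k ⟨com, hcm, hblocks⟩ hk hw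
      obtain ⟨j, t, rfl⟩ : ∃ j t, k = blk j t := ⟨(dec k).1, (dec k).2, (blk_dec k).symm⟩
      have hρjt : (fun s => ρ (blk j s)) t = none := hk
      cases hcj : com j with
      | some c =>
        -- block already committed: answer preserving attainability
        obtain ⟨⟨x, hxa, hxv⟩, hwj⟩ := (hblocks j).2 c hcj
        refine ⟨x t, com, hcm, fun j' => ?_⟩
        by_cases hjj : j' = j
        · subst hjj
          have hupd := updF_blk_same ρ j' t (some (x t))
          rw [hupd]
          constructor
          · intro h'
            rw [hcj] at h'
            cases h'
          · intro bj h'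
            rw [hcj] at h'
            injection h' with h'
            subst h'
            refine ⟨⟨x, agrees_updF_of_agrees hxa, hxv⟩, ?_⟩
            rw [wSize_updF (ρ := fun s => ρ (blk j' s)) (k := t) (x t) hk]
            omega
        · have hupd := updF_blk_other ρ t (some (x t)) hjj
          rw [hupd]
          exact hblocks j'
      | none =>
        have hfree := (hblocks j).1 hcj
        by_cases hcase : wSize (fun s => ρ (blk j s)) + 2 ≤ 4 ^ i
        · -- free block, still room: use inner adversary
          obtain ⟨b, hPb⟩ := p2 (fun s => ρ (blk j s)) t hfree.1 hρjt hcase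
          refine ⟨b, com, hcm, fun j' => ?_⟩
          by_cases hjj : j' = j
          · subst hjj
            have hupd := updF_blk_same ρ j' t (some b)
            rw [hupd]
            constructor
            · intro _
              refine ⟨hPb, ?_⟩
              rw [wSize_updF (ρ := fun s => ρ (blk j' s)) (k := t) b hk]
              omega
            · intro bj h'
              rw [hcj] at h'
              cases h'
          · have hupd := updF_blk_other ρ t (some b) hjj
            rw [hupd]
            exact hblocks j'
        · -- block is full: commit it
          have hEq : wSize (fun s => ρ (blk j s)) + 1 = 4 ^ i := by
            have := hfree.2
            omega
          -- at most two blocks committed so far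
          have hcom2 : wSize com ≤ 2 := by
            by_contra hcon
            push_neg at hcon
            have hsum := wSize_blocks ρ
            have hsl : ∑ j' : Fin 4, (if j' = j then wSize (fun s => ρ (blk j s))
                else if (com j').isSome then 4 ^ i else 0) ≤ wSize ρ := by
              rw [hsum]
              refine Finset.sum_le_sum (fun j' _ => ?_)
              by_cases hjj : j' = j
              · subst hjj; rw [if_pos rfl]
              · rw [if_neg hjj]
                cases hcj' : com j' with
                | none => simp
                | some c' =>
                  simp only [Option.isSome_some, if_true]
                  exact ((hblocks j').2 c' hcj').2
            have hcompute : ∑ j' : Fin 4, (if j' = j then wSize (fun s => ρ (blk j s))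
                else if (com j').isSome then 4 ^ i else 0)
                = wSize (fun s => ρ (blk j s)) + wSize com * 4 ^ i := by
              rw [← Finset.add_sum_erase Finset.univ _ (Finset.mem_univ j), if_pos rfl]
              congr 1
              have hcg : ∀ j' ∈ Finset.univ.erase j, (if j' = j then wSize (fun s => ρ (blk j s))
                  else if (com j').isSome then 4 ^ i else 0)
                  = (if (com j').isSome then 4 ^ i else 0) := by
                intro j' hj'
                rw [if_neg (Finset.ne_of_mem_erase hj')]
              rw [Finset.sum_congr rfl hcg, ← Finset.sum_filter, Finset.sum_const, smul_eq_mul,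
                Finset.filter_erase, Finset.erase_eq_of_notMem (by simp [hcj])]
              rfl
            rw [hcompute] at hsl
            have hmul : 3 * 4 ^ i ≤ wSize com * 4 ^ i :=
              Nat.mul_le_mul_right _ (by omega)
            have hp : (4 : ℕ) ^ (i + 1) = 4 * 4 ^ i := by rw [pow_succ]; ring
            omega
          obtain ⟨bc, hbc⟩ := inv_ext com hcm hcom2 j hcj
          obtain ⟨x, hxa, hxv⟩ := p1 _ hfree.1 bc
          refine ⟨x t, updF com j (some bc), hbc, fun j' => ?_⟩
          by_cases hjj : j' = j
          · subst hjj
            have hcu : updF com j' (some bc) j' = some bc := by unfold updF; rw [if_pos rfl]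
            have hupd := updF_blk_same ρ j' t (some (x t))
            rw [hcu, hupd]
            constructor
            · intro h'
              cases h'
            · intro bj h'
              injection h' with h'
              subst h'
              refine ⟨⟨x, agrees_updF_of_agrees hxa, hxv⟩, ?_⟩
              rw [wSize_updF (ρ := fun s => ρ (blk j' s)) (k := t) (x t) hk]
              omega
          · have hcu : updF com j (some bc) j' = com j' := by unfold updF; rw [if_neg hjj]
            have hupd := updF_blk_other ρ t (some (x t)) hjj
            rw [hcu, hupd]
            exact hblocks j'

end Package

lemma qc_lower (i : ℕ) : 4 ^ i ≤ queryComplexity (G i) := by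
  obtain ⟨P, p0, p1, p2⟩ := package i
  unfold queryComplexity
  refine le_csInf ⟨4 ^ i, fullTree (G i), fullTree_depth _, fullTree_eval _⟩ ?_
  rintro d ⟨T, hTd, hTe⟩
  by_contra hlt
  push_neg at hlt
  refine tree_bound (G i) P (4 ^ i) p1 p2 T (fun _ => none) p0 ?_ (fun x _ => hTe x)
  rw [wSize_none]
  omega

theorem savicky_aux :
    ∃ G : (i : ℕ) → (Fin (4 ^ i) → Bool) → Bool,
      ∀ i : ℕ, 1 ≤ i →
        (∃ Cs : Set (Fin (4 ^ i) → Option Bool),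
          IsUDNF (G i) Cs ∧ ∀ c ∈ Cs, 1 ≤ wSize c ∧ wSize c ≤ 3 ^ i) ∧
        (∃ Cs : Set (Fin (4 ^ i) → Option Bool),
          IsUDNF (fun x => !(G i x)) Cs ∧ ∀ c ∈ Cs, 1 ≤ wSize c ∧ wSize c ≤ 3 ^ i) ∧
        4 ^ i + 2 ≤ 3 * queryComplexity (G i) := by
  refine ⟨G, fun i _ => ⟨⟨Cs i true, ⟨fun x => G_rep i x true, fun x => G_unamb i true x⟩,
      fun c hc => G_width i true c hc⟩,
    ⟨Cs i false, ⟨fun x => ?_, fun x => G_unamb i false x⟩, fun c hc => G_width i false c hc⟩,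
    ?_⟩⟩
  · rw [Bool.not_eq_true']
    exact G_rep i x false
  · have h := qc_lower i
    have hp := pow4_pos i
    omega

end SavickyAux

/-- Savický: There is a family of Boolean functions
`G_i : {0,1}^{4^i} → {0,1}` such that both `G_i` and its negation have unambiguous
DNF representations whose clauses each have between `1` and `3^i` literals, and
`D(G_i) ≥ (4^i + 2)/3` (stated as `4^i + 2 ≤ 3 · D(G_i)`). -/
theorem savicky :
    ∃ G : (i : ℕ) → (Fin (4 ^ i) → Bool) → Bool,
      ∀ i : ℕ, 1 ≤ i →
        (∃ Cs : Set (Fin (4 ^ i) → Option Bool),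
          IsUDNF (G i) Cs ∧ ∀ c ∈ Cs, 1 ≤ wSize c ∧ wSize c ≤ 3 ^ i) ∧
        (∃ Cs : Set (Fin (4 ^ i) → Option Bool),
          IsUDNF (fun x => !(G i x)) Cs ∧ ∀ c ∈ Cs, 1 ≤ wSize c ∧ wSize c ≤ 3 ^ i) ∧
        4 ^ i + 2 ≤ 3 * queryComplexity (G i) := by
  exact savicky_aux
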